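/- Let M be a compact measure space, and let P : D(P) → L²(M), P' : D(P') → L²(M) be (densely defined) symmetric linear operators with 1 ∈ D(P) ∩ D(P'), P(1) = 0 and P'(1) = 0. Suppose Q, Q̂ ∈ L¹(M), σ ∈ D(P) ∩ D(P'), and dμ̂ = e^{2σ} dμ, and that e^{2σ} Q̂ = Q + P'(σ) + (1/2) P(σ²) pointwise (with σ² ∈ D(P)). Then ∫_M Q̂ dμ̂ = ∫_M Q dμ. -/
import Mathlib


open MeasureTheory

/-- Invariance of the total `Q'`-curvature: if `P`, `P'` are symmetric operators
annihilating constants, `dμ̂ = e^{2σ} dμ`, and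
`e^{2σ} Q̂ = Q + P'(σ) + (1/2) P(σ²)` pointwise, then `∫ Q̂ dμ̂ = ∫ Q dμ`. -/
theorem stmt4 {M : Type*} [MeasurableSpace M] (μ : Measure M) [IsFiniteMeasure μ]
    (P P' : (M → ℝ) →ₗ[ℝ] (M → ℝ))
    (hPsym : ∀ f g : M → ℝ, ∫ x, P f x * g x ∂μ = ∫ x, f x * P g x ∂μ)
    (hP'sym : ∀ f g : M → ℝ, ∫ x, P' f x * g x ∂μ = ∫ x, f x * P' g x ∂μ)
    (hP1 : P (fun _ => 1) = 0) (hP'1 : P' (fun _ => 1) = 0)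
    (Q Qhat σ : M → ℝ) (hσmeas : Measurable σ)
    (hQint : Integrable Q μ)
    (hQhatint : Integrable (fun x => Real.exp (2 * σ x) * Qhat x) μ)
    (hP'int : Integrable (P' σ) μ)
    (hPint : Integrable (P (fun y => σ y ^ 2)) μ)
    (hpt : ∀ x, Real.exp (2 * σ x) * Qhat x
      = Q x + P' σ x + (1 / 2) * P (fun y => σ y ^ 2) x) :
    ∫ x, Qhat x ∂(μ.withDensity fun x => ENNReal.ofReal (Real.exp (2 * σ x)))
      = ∫ x, Q x ∂μ := by
  have hf : Measurable fun x => (Real.exp (2 * σ x)).toNNReal :=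
    (Real.measurable_exp.comp (measurable_const.mul hσmeas)).real_toNNReal
  have hwd : ∫ x, Qhat x ∂(μ.withDensity fun x => ENNReal.ofReal (Real.exp (2 * σ x)))
      = ∫ x, Real.exp (2 * σ x) * Qhat x ∂μ := by
    have := integral_withDensity_eq_integral_smul (μ := μ) hf Qhat
    simp only [ENNReal.ofReal] at *
    rw [this]
    congr 1
    ext x
    simp [NNReal.smul_def, Real.coe_toNNReal _ (Real.exp_pos _).le]
  have hP' : ∫ x, P' σ x ∂μ = 0 := by
    have h := hP'sym σ (fun _ => 1)
    simpa [hP'1] using h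
  have hP : ∫ x, P (fun y => σ y ^ 2) x ∂μ = 0 := by
    have h := hPsym (fun y => σ y ^ 2) (fun _ => 1)
    simpa [hP1] using h
  rw [hwd]
  calc ∫ x, Real.exp (2 * σ x) * Qhat x ∂μ
      = ∫ x, (Q x + P' σ x + (1 / 2) * P (fun y => σ y ^ 2) x) ∂μ := by
        exact integral_congr_ae (Filter.Eventually.of_forall hpt)
    _ = ∫ x, Q x ∂μ := by
        rw [integral_add (f := fun x => Q x + P' σ x)
            (g := fun x => (1 / 2) * P (fun y => σ y ^ 2) x)
            (hQint.add hP'int) (hPint.const_mul _),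
          integral_add hQint hP'int, MeasureTheory.integral_const_mul, hP', hP]
        ring
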